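/- Let p be a prime and n a positive integer. If A ⊆ ℤ_p × ℤ_{p^n} is a spectral set with |A| = p, then A tiles ℤ_p × ℤ_{p^n}. -/

import Mathlib

open Complex Pointwise

/-- The inner product on `ℤ_p × ℤ_{p^n}`: `⟨u,v⟩ = p^(n-1)·u₁·v₁ + u₂·v₂` in `ℤ_{p^n}`. -/
def inn (p n : ℕ) (u v : ZMod p × ZMod (p ^ n)) : ZMod (p ^ n) :=
  (p : ZMod (p ^ n)) ^ (n - 1) * (u.1.val : ZMod (p ^ n)) * (v.1.val : ZMod (p ^ n)) +
    u.2 * v.2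


lemma inn_add_right (p : ℕ) (hp : 1 < p) (n : ℕ) (hn : 1 ≤ n) (d u v : ZMod p × ZMod (p ^ n)) :
    inn p n d (u + v) = inn p n d u + inn p n d v := by
  haveI : NeZero p := ⟨by omega⟩
  have hgen : ∀ x : ℕ, (p : ZMod (p ^ n)) ^ (n - 1) * ((x % p : ℕ) : ZMod (p ^ n))
      = (p : ZMod (p ^ n)) ^ (n - 1) * (x : ZMod (p ^ n)) := by
    intro x
    have hppow : (p : ZMod (p ^ n)) ^ (n - 1) * (p : ZMod (p ^ n)) = 0 := by
      have h : n - 1 + 1 = n := by omega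
      rw [← pow_succ, h]
      have h2 : ((p ^ n : ℕ) : ZMod (p ^ n)) = 0 := ZMod.natCast_self _
      rw [← h2]
      push_cast
      ring
    conv_rhs => rw [← Nat.div_add_mod x p]
    push_cast
    linear_combination (-((x / p : ℕ) : ZMod (p ^ n))) * hppow
  unfold inn
  have hfst : (u + v).1 = u.1 + v.1 := rfl
  have hsnd : (u + v).2 = u.2 + v.2 := rfl
  rw [hfst, hsnd]
  have hmul : (p : ZMod (p ^ n)) ^ (n - 1) * (((u.1 + v.1).val : ℕ) : ZMod (p ^ n))
      = (p : ZMod (p ^ n)) ^ (n - 1) * ((u.1.val : ZMod (p ^ n)) + (v.1.val : ZMod (p ^ n))) := by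
    rw [ZMod.val_add, hgen]
    push_cast
    ring
  linear_combination ((d.1.val : ℕ) : ZMod (p ^ n)) * hmul

lemma inn_sub_right (p : ℕ) (hp : 1 < p) (n : ℕ) (hn : 1 ≤ n) (d g a : ZMod p × ZMod (p ^ n)) :
    inn p n d (g - a) = inn p n d g - inn p n d a := by
  have h := inn_add_right p hp n hn d (g - a) a
  rw [sub_add_cancel] at h
  rw [h]
  ring


open Polynomial in
lemma sum_int_eq_one {s : Finset ℕ} {f : ℕ → ℤ}
    (h0 : ∀ i ∈ s, 0 ≤ f i) (h1 : ∑ i ∈ s, f i = 1) :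
    ∃ c ∈ s, f c = 1 ∧ ∀ i ∈ s, i ≠ c → f i = 0 := by
  have hex : ∃ c ∈ s, 0 < f c := by
    by_contra h
    push_neg at h
    have : ∑ i ∈ s, f i ≤ 0 := Finset.sum_nonpos (fun i hi => h i hi)
    omega
  obtain ⟨c, hcs, hc⟩ := hex
  have hsplit : f c + ∑ i ∈ s.erase c, f i = 1 := by
    rw [Finset.add_sum_erase s f hcs]; exact h1
  have hrest0 : ∀ i ∈ s.erase c, 0 ≤ f i := fun i hi => h0 i (Finset.mem_of_mem_erase hi)
  have hrest : 0 ≤ ∑ i ∈ s.erase c, f i := Finset.sum_nonneg hrest0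
  have hfc : f c = 1 := by omega
  have hrest_eq : ∑ i ∈ s.erase c, f i = 0 := by omega
  refine ⟨c, hcs, hfc, fun i hi hne => ?_⟩
  exact (Finset.sum_eq_zero_iff_of_nonneg hrest0).mp hrest_eq i (Finset.mem_erase.mpr ⟨hne, hi⟩)

open Polynomial in
lemma key_struct {p : ℕ} (hp : p.Prime) (m : ℕ) {ι : Type*} [DecidableEq ι]
    (A : Finset ι) (x : ι → ℕ) (hx : ∀ a ∈ A, x a < p ^ (m + 1))
    (hcard : A.card = p)
    (hsum : ∑ a ∈ A, Complex.exp (2 * Real.pi * Complex.I * (x a : ℂ) / ((p : ℂ) ^ (m + 1))) = 0) :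
    ∃ c < p ^ m, Set.InjOn x A ∧ ∀ a ∈ A, ∃ j < p, x a = c + j * p ^ m := by
  have hpn : (p : ℕ) ^ (m + 1) ≠ 0 := pow_ne_zero _ hp.pos.ne'
  set ζ : ℂ := Complex.exp (2 * Real.pi * Complex.I / ((p ^ (m + 1) : ℕ) : ℂ)) with hζdef
  have hζ : IsPrimitiveRoot ζ (p ^ (m + 1)) := Complex.isPrimitiveRoot_exp _ hpn
  have hterm : ∀ a : ι, Complex.exp (2 * Real.pi * Complex.I * (x a : ℂ) / ((p : ℂ) ^ (m + 1)))
      = ζ ^ (x a) := by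
    intro a
    rw [hζdef, ← Complex.exp_nat_mul]
    congr 1
    push_cast
    ring
  set P : ℤ[X] := ∑ a ∈ A, X ^ (x a) with hPdef
  have hPeval : aeval ζ P = 0 := by
    rw [hPdef, map_sum]
    simp only [map_pow, aeval_X]
    rw [← hsum]
    exact Finset.sum_congr rfl fun a _ => (hterm a).symm
  have hcoeff : ∀ N : ℕ, P.coeff N = ((A.filter (fun a => x a = N)).card : ℤ) := by
    intro N
    rw [hPdef, Polynomial.finset_sum_coeff]
    rw [Finset.card_filter]
    push_cast
    refine Finset.sum_congr rfl fun a _ => ?_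
    rw [Polynomial.coeff_X_pow]
    simp [eq_comm]
  have hcoeff_nonneg : ∀ N, 0 ≤ P.coeff N := by
    intro N; rw [hcoeff]; positivity
  have hP1 : P.eval 1 = (p : ℤ) := by
    rw [hPdef, Polynomial.eval_finset_sum]
    simp [hcard]
  have hpz : (p : ℤ) ≠ 0 := Int.natCast_ne_zero.mpr hp.ne_zero
  have hPne : P ≠ 0 := by
    intro h
    rw [h, Polynomial.eval_zero] at hP1
    exact hpz hP1.symm
  have hPdeg : P.natDegree < p ^ (m + 1) := by
    have : P.natDegree ≤ p ^ (m + 1) - 1 := by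
      apply Polynomial.natDegree_sum_le_of_forall_le
      intro a ha
      rw [Polynomial.natDegree_X_pow]
      have := hx a ha; omega
    have hpos : 0 < p ^ (m + 1) := pow_pos hp.pos _
    omega
  have hmin : cyclotomic (p ^ (m + 1)) ℤ = minpoly ℤ ζ :=
    Polynomial.cyclotomic_eq_minpoly hζ (pow_pos hp.pos _)
  have hdvd : cyclotomic (p ^ (m + 1)) ℤ ∣ P := by
    rw [hmin]
    exact minpoly.isIntegrallyClosed_dvd (hζ.isIntegral (pow_pos hp.pos _)) hPeval
  obtain ⟨Q, hQ⟩ := hdvd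
  have hΦ : cyclotomic (p ^ (m + 1)) ℤ = ∑ i ∈ Finset.range p, X ^ (p ^ m * i) := by
    rw [Polynomial.cyclotomic_prime_pow_eq_geom_sum hp]
    exact Finset.sum_congr rfl fun i _ => by rw [← pow_mul]
  have hΦ1 : (cyclotomic (p ^ (m + 1)) ℤ).eval 1 = (p : ℤ) := by
    rw [hΦ, Polynomial.eval_finset_sum]
    simp
  have hΦne : cyclotomic (p ^ (m + 1)) ℤ ≠ 0 := by
    intro h
    rw [h, Polynomial.eval_zero] at hΦ1
    exact hpz hΦ1.symm
  have hQne : Q ≠ 0 := by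
    intro h; rw [h, mul_zero] at hQ; exact hPne hQ
  have hΦdeg : (cyclotomic (p ^ (m + 1)) ℤ).natDegree = p ^ m * (p - 1) := by
    rw [Polynomial.natDegree_cyclotomic, Nat.totient_prime_pow hp (Nat.succ_pos m)]
    simp
  have hQdeg : Q.natDegree < p ^ m := by
    have hnd : P.natDegree = p ^ m * (p - 1) + Q.natDegree := by
      rw [hQ, Polynomial.natDegree_mul hΦne hQne, hΦdeg]
    rw [hnd] at hPdeg
    have h1 : p ^ (m + 1) = p ^ m * p := by rw [pow_succ]
    rw [h1] at hPdeg
    have hsub : p ^ m * p = p ^ m * (p - 1) + p ^ m := by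
      obtain ⟨q, hq⟩ : ∃ q, p = q + 1 := ⟨p - 1, by have := hp.pos; omega⟩
      subst hq
      rw [Nat.add_sub_cancel, Nat.mul_add, Nat.mul_one]
    omega
  -- coefficient extraction
  have hPQ : ∀ r < p ^ m, ∀ i < p, P.coeff (r + p ^ m * i) = Q.coeff r := by
    intro r hr i hi
    rw [hQ, hΦ, Finset.sum_mul, Polynomial.finset_sum_coeff]
    rw [Finset.sum_eq_single i]
    · rw [mul_comm (X ^ (p ^ m * i)) Q, Polynomial.coeff_mul_X_pow']
      rw [if_pos (Nat.le_add_left _ _)]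
      congr 1
      omega
    · intro i' hi' hne
      rw [mul_comm, Polynomial.coeff_mul_X_pow']
      rcases lt_or_gt_of_ne hne with h | h
      · rw [if_pos]
        · apply Polynomial.coeff_eq_zero_of_natDegree_lt
          have h2 : p ^ m * i' + p ^ m ≤ p ^ m * i := by
            have : i' + 1 ≤ i := h
            calc p ^ m * i' + p ^ m = p ^ m * (i' + 1) := by ring
            _ ≤ p ^ m * i := Nat.mul_le_mul_left _ this
          omega
        · have : p ^ m * i' ≤ p ^ m * i := Nat.mul_le_mul_left _ h.le
          omega
      · rw [if_neg]
        have h2 : p ^ m * i + p ^ m ≤ p ^ m * i' := by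
          have : i + 1 ≤ i' := h
          calc p ^ m * i + p ^ m = p ^ m * (i + 1) := by ring
          _ ≤ p ^ m * i' := Nat.mul_le_mul_left _ this
        omega
    · intro h
      exact absurd (Finset.mem_range.mpr hi) h
  have hQ1 : Q.eval 1 = 1 := by
    have h2 : (p : ℤ) * Q.eval 1 = (p : ℤ) := by
      conv_lhs => rw [← hΦ1]
      rw [← Polynomial.eval_mul, ← hQ, hP1]
    exact mul_left_cancel₀ hpz (by rw [mul_one]; exact h2)
  have hQnonneg : ∀ r < p ^ m, 0 ≤ Q.coeff r := by
    intro r hr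
    have := hPQ r hr 0 hp.pos
    simp only [mul_zero, add_zero] at this
    rw [← this]
    exact hcoeff_nonneg r
  have heval : Q.eval 1 = ∑ r ∈ Finset.range (Q.natDegree + 1), Q.coeff r := by
    rw [Polynomial.eval_eq_sum_range]
    simp
  obtain ⟨c, hcs, hc1, hc0⟩ := sum_int_eq_one
    (s := Finset.range (Q.natDegree + 1)) (f := fun r => Q.coeff r)
    (fun i hi => hQnonneg i (by have := Finset.mem_range.mp hi; omega))
    (by rw [← heval, hQ1])
  have hclt : c < p ^ m := by
    have := Finset.mem_range.mp hcs; omega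
  have hQc : ∀ r : ℕ, r ≠ c → Q.coeff r = 0 := by
    intro r hr
    by_cases h : r < Q.natDegree + 1
    · exact hc0 r (Finset.mem_range.mpr h) hr
    · exact Polynomial.coeff_eq_zero_of_natDegree_lt (by omega)
  -- main conclusions
  have hmain : ∀ a ∈ A, x a % p ^ m = c ∧ x a / p ^ m < p := by
    intro a ha
    have hxa : x a < p ^ (m + 1) := hx a ha
    have hpm : 0 < p ^ m := pow_pos hp.pos _
    have hdiv : x a / p ^ m < p := by
      rw [Nat.div_lt_iff_lt_mul hpm, mul_comm]
      rw [pow_succ] at hxa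
      exact hxa
    have hxeq : x a % p ^ m + p ^ m * (x a / p ^ m) = x a := Nat.mod_add_div _ _
    have hco : P.coeff (x a) = Q.coeff (x a % p ^ m) := by
      conv_lhs => rw [← hxeq]
      exact hPQ _ (Nat.mod_lt _ hpm) _ hdiv
    have hpos : 0 < ((A.filter (fun a' => x a' = x a)).card : ℤ) := by
      have : a ∈ A.filter (fun a' => x a' = x a) := Finset.mem_filter.mpr ⟨ha, rfl⟩
      have := Finset.card_pos.mpr ⟨a, this⟩
      exact_mod_cast this
    have hne : Q.coeff (x a % p ^ m) ≠ 0 := by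
      rw [← hco, hcoeff]; omega
    have : x a % p ^ m = c := by
      by_contra h
      exact hne (hQc _ h)
    exact ⟨this, hdiv⟩
  have hcount1 : ∀ a ∈ A, ((A.filter (fun a' => x a' = x a)).card : ℤ) = 1 := by
    intro a ha
    have := (hmain a ha).1
    have hco : P.coeff (x a) = Q.coeff c := by
      have hxa : x a < p ^ (m + 1) := hx a ha
      have hpm : 0 < p ^ m := pow_pos hp.pos _
      have hxeq : x a % p ^ m + p ^ m * (x a / p ^ m) = x a := Nat.mod_add_div _ _
      conv_lhs => rw [← hxeq, this]
      exact hPQ _ hclt _ (hmain a ha).2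
    rw [← hcoeff, hco, hc1]
  refine ⟨c, hclt, ?_, ?_⟩
  · intro a ha a' ha' hxx
    have h1 : (A.filter (fun b => x b = x a)).card = 1 := by
      have := hcount1 a ha; exact_mod_cast this
    have hma : a ∈ A.filter (fun b => x b = x a) := Finset.mem_filter.mpr ⟨ha, rfl⟩
    have hma' : a' ∈ A.filter (fun b => x b = x a) := Finset.mem_filter.mpr ⟨ha', hxx.symm⟩
    exact Finset.card_le_one.mp h1.le a hma a' hma'
  · intro a ha
    obtain ⟨hmod, hdiv⟩ := hmain a ha
    refine ⟨x a / p ^ m, hdiv, ?_⟩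
    have h2 := Nat.mod_add_div (x a) (p ^ m)
    rw [hmod, mul_comm] at h2
    omega


-- existence: subtracting (val / p^m) * p^m lands in low range
lemma digit_exists {p m : ℕ} (hp : 1 < p) (z : ZMod (p ^ (m + 1))) :
    (z - ((z.val / p ^ m : ℕ) : ZMod (p ^ (m + 1))) * (p : ZMod (p ^ (m + 1))) ^ m).val
      < p ^ m := by
  haveI : NeZero (p ^ (m + 1)) := ⟨pow_ne_zero _ (by omega)⟩
  have hpm : 0 < p ^ m := pow_pos (by omega) _
  set k : ℕ := z.val / p ^ m with hk
  have hle : k * p ^ m ≤ z.val := Nat.div_mul_le_self _ _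
  have hcast : ((k : ZMod (p ^ (m + 1))) * (p : ZMod (p ^ (m + 1))) ^ m)
      = ((k * p ^ m : ℕ) : ZMod (p ^ (m + 1))) := by push_cast; ring
  have hz : z = ((z.val : ℕ) : ZMod (p ^ (m + 1))) := (ZMod.natCast_rightInverse z).symm
  have hsub : z - ((k : ZMod (p ^ (m + 1))) * (p : ZMod (p ^ (m + 1))) ^ m)
      = ((z.val - k * p ^ m : ℕ) : ZMod (p ^ (m + 1))) := by
    rw [hcast, Nat.cast_sub hle, ← hz]
  rw [hsub]
  have hlt : z.val - k * p ^ m < p ^ m := by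
    have h := Nat.mod_add_div z.val (p ^ m)
    rw [mul_comm] at h
    rw [← hk] at h
    have hmod : z.val % p ^ m < p ^ m := Nat.mod_lt _ hpm
    omega
  rw [ZMod.val_natCast]
  have h2 : z.val - k * p ^ m < p ^ (m + 1) := by
    have : p ^ m ≤ p ^ (m + 1) := Nat.pow_le_pow_right (by omega) (by omega)
    omega
  rw [Nat.mod_eq_of_lt h2]
  exact hlt

-- uniqueness of digit
lemma digit_unique {p m : ℕ} (hp : 1 < p) (z : ZMod (p ^ (m + 1))) (j k : ℕ)
    (hj : j < p) (hk : k < p)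
    (h1 : (z - (j : ZMod (p ^ (m + 1))) * (p : ZMod (p ^ (m + 1))) ^ m).val < p ^ m)
    (h2 : (z - (k : ZMod (p ^ (m + 1))) * (p : ZMod (p ^ (m + 1))) ^ m).val < p ^ m) :
    j = k := by
  haveI : NeZero (p ^ (m + 1)) := ⟨pow_ne_zero _ (by omega)⟩
  -- symmetric helper inline
  suffices H : ∀ j k : ℕ, j ≤ k → j < p → k < p →
      (z - (j : ZMod (p ^ (m + 1))) * (p : ZMod (p ^ (m + 1))) ^ m).val < p ^ m →
      (z - (k : ZMod (p ^ (m + 1))) * (p : ZMod (p ^ (m + 1))) ^ m).val < p ^ m → j = k by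
    rcases le_total j k with h | h
    · exact H j k h hj hk h1 h2
    · exact (H k j h hk hj h2 h1).symm
  intro j k hjk hj hk h1 h2
  set u := z - (k : ZMod (p ^ (m + 1))) * (p : ZMod (p ^ (m + 1))) ^ m with hu
  have hrew : z - (j : ZMod (p ^ (m + 1))) * (p : ZMod (p ^ (m + 1))) ^ m
      = u + (((k - j) * p ^ m : ℕ) : ZMod (p ^ (m + 1))) := by
    rw [hu]
    push_cast [Nat.cast_sub hjk]
    ring
  rw [hrew] at h1
  have hpm : 0 < p ^ m := pow_pos (by omega) _
  have hstep : (p - 1) * p ^ m + p ^ m = p ^ (m + 1) := by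
    have h : p - 1 + 1 = p := by omega
    calc (p - 1) * p ^ m + p ^ m = (p - 1 + 1) * p ^ m := by ring
    _ = p * p ^ m := by rw [h]
    _ = p ^ (m + 1) := by rw [pow_succ, mul_comm]
  have h3 : (k - j) * p ^ m ≤ (p - 1) * p ^ m := Nat.mul_le_mul_right _ (by omega)
  have hwlt : (k - j) * p ^ m < p ^ (m + 1) := by omega
  have hvaladd : (u + (((k - j) * p ^ m : ℕ) : ZMod (p ^ (m + 1)))).val
      = u.val + (k - j) * p ^ m := by
    rw [ZMod.val_add, ZMod.val_natCast, Nat.mod_eq_of_lt hwlt]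
    apply Nat.mod_eq_of_lt
    have h6 : u.val < p ^ m := h2
    omega
  rw [hvaladd] at h1
  have : (k - j) * p ^ m < p ^ m := by omega
  have : k - j = 0 := by
    by_contra h
    have : p ^ m ≤ (k - j) * p ^ m := Nat.le_mul_of_pos_left _ (by omega)
    omega
  omega

/-- The character `χ_g(h) = e^(2πi⟨g,h⟩/p^n)`. -/
noncomputable def chi (p n : ℕ) (g h : ZMod p × ZMod (p ^ n)) : ℂ :=
  Complex.exp (2 * Real.pi * Complex.I * ((inn p n g h).val : ℂ) / ((p : ℂ) ^ n))

/-- `χ_g(A) = Σ_{a ∈ A} χ_g(a)`. -/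
noncomputable def chiSum (p n : ℕ) (g : ZMod p × ZMod (p ^ n))
    (A : Finset (ZMod p × ZMod (p ^ n))) : ℂ :=
  ∑ a ∈ A, chi p n g a

/-- The zero set `Z_A = {g : χ_g(A) = 0}`. -/
def zeroSet (p n : ℕ) (A : Finset (ZMod p × ZMod (p ^ n))) :
    Set (ZMod p × ZMod (p ^ n)) :=
  {g | chiSum p n g A = 0}

/-- `(A,B)` is a spectral pair: `|A| = |B|` and `χ_{b-b'}(A) = 0` for distinct `b,b' ∈ B`. -/
def SpectralPair (p n : ℕ) (A B : Finset (ZMod p × ZMod (p ^ n))) : Prop :=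
  A.card = B.card ∧ ∀ b ∈ B, ∀ b' ∈ B, b ≠ b' → chiSum p n (b - b') A = 0

/-- `A` is a spectral set: some `B` makes `(A,B)` a spectral pair. -/
def SpectralSet (p n : ℕ) (A : Finset (ZMod p × ZMod (p ^ n))) : Prop :=
  ∃ B : Finset (ZMod p × ZMod (p ^ n)), SpectralPair p n A B

/-- `(A,T)` is a tiling pair: every `g` has a unique representation `g = a + t`, `a ∈ A`, `t ∈ T`. -/
def TilingPair (p n : ℕ) (A T : Finset (ZMod p × ZMod (p ^ n))) : Prop :=
  ∀ g : ZMod p × ZMod (p ^ n),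
    ∃! x : (ZMod p × ZMod (p ^ n)) × (ZMod p × ZMod (p ^ n)),
      x.1 ∈ A ∧ x.2 ∈ T ∧ g = x.1 + x.2

/-- `A` tiles `ℤ_p × ℤ_{p^n}` by translation. -/
def Tiles (p n : ℕ) (A : Finset (ZMod p × ZMod (p ^ n))) : Prop :=
  ∃ T : Finset (ZMod p × ZMod (p ^ n)), TilingPair p n A T

/-- A spectral set of size `p` is a tile. -/
theorem tile_of_spectral_card_p (p n : ℕ) (hp : p.Prime) (hn : 1 ≤ n)
    (A : Finset (ZMod p × ZMod (p ^ n))) (hA : SpectralSet p n A) (hcard : A.card = p) :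
    Tiles p n A := by
  haveI : NeZero p := ⟨hp.ne_zero⟩
  haveI : NeZero (p ^ n) := ⟨pow_ne_zero _ hp.ne_zero⟩
  have hp1 : 1 < p := hp.one_lt
  obtain ⟨m, rfl⟩ : ∃ m, n = m + 1 := ⟨n - 1, by omega⟩
  obtain ⟨B, hAB, hB⟩ := hA
  have hBcard : B.card = p := by rw [← hAB, hcard]
  obtain ⟨b, hb, b', hb', hbb⟩ := Finset.one_lt_card.mp (by rw [hBcard]; exact hp.one_lt)
  have hz : chiSum p (m + 1) (b - b') A = 0 := hB b hb b' hb' hbb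
  set d : ZMod p × ZMod (p ^ (m + 1)) := b - b' with hd
  have hpm : 0 < p ^ m := pow_pos hp.pos _
  have hxlt : ∀ a ∈ A, (inn p (m + 1) d a).val < p ^ (m + 1) := fun a _ => ZMod.val_lt _
  have hsum : ∑ a ∈ A, Complex.exp (2 * Real.pi * Complex.I *
      (((inn p (m + 1) d a).val : ℕ) : ℂ) / ((p : ℂ) ^ (m + 1))) = 0 := by
    rw [← hz]
    rfl
  obtain ⟨c, hclt, hinj, hform⟩ := key_struct hp m A (fun a => (inn p (m + 1) d a).val)
    hxlt hcard hsum
  have hjspec : ∀ a ∈ A, ((inn p (m + 1) d a).val - c) / p ^ m < p ∧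
      (inn p (m + 1) d a).val = c + (((inn p (m + 1) d a).val - c) / p ^ m) * p ^ m := by
    intro a ha
    obtain ⟨j', hj', hxa⟩ := hform a ha
    have hj : ((inn p (m + 1) d a).val - c) / p ^ m = j' := by
      rw [hxa, Nat.add_sub_cancel_left, Nat.mul_div_cancel _ hpm]
    rw [hj]
    exact ⟨hj', hxa⟩
  set j : ZMod p × ZMod (p ^ (m + 1)) → ℕ :=
    fun a => ((inn p (m + 1) d a).val - c) / p ^ m with hjdef
  have hφa : ∀ a ∈ A, inn p (m + 1) d a
      = (c : ZMod (p ^ (m + 1))) + (j a : ZMod (p ^ (m + 1))) * (p : ZMod (p ^ (m + 1))) ^ m := by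
    intro a ha
    have h1 : (((inn p (m + 1) d a).val : ℕ) : ZMod (p ^ (m + 1))) = inn p (m + 1) d a :=
      ZMod.natCast_rightInverse _
    rw [← h1, (hjspec a ha).2]
    push_cast
    ring
  have hjinj : Set.InjOn j A := by
    intro a ha a' ha' hjj
    apply hinj ha ha'
    have hjj' : ((inn p (m + 1) d a).val - c) / p ^ m
        = ((inn p (m + 1) d a').val - c) / p ^ m := hjj
    simp only
    rw [(hjspec a ha).2, (hjspec a' ha').2, hjj']
  have hjimg : A.image j = Finset.range p := by
    apply Finset.eq_of_subset_of_card_le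
    · intro v hv
      obtain ⟨a, ha, rfl⟩ := Finset.mem_image.mp hv
      exact Finset.mem_range.mpr (hjspec a ha).1
    · rw [Finset.card_range, Finset.card_image_of_injOn hjinj, hcard]
  have hjsurj : ∀ k < p, ∃ a ∈ A, j a = k := by
    intro k hk
    have hmem : k ∈ A.image j := by rw [hjimg]; exact Finset.mem_range.mpr hk
    obtain ⟨a, ha, hja⟩ := Finset.mem_image.mp hmem
    exact ⟨a, ha, hja⟩
  refine ⟨Finset.filter (fun t => (inn p (m + 1) d t).val < p ^ m) Finset.univ, ?_⟩
  intro g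
  set z : ZMod (p ^ (m + 1)) := inn p (m + 1) d g - (c : ZMod (p ^ (m + 1))) with hzdef
  have hkp : z.val / p ^ m < p := by
    have hzv : z.val < p ^ (m + 1) := ZMod.val_lt _
    rw [Nat.div_lt_iff_lt_mul hpm, mul_comm, ← pow_succ]
    exact hzv
  obtain ⟨a₀, ha₀, hja₀⟩ := hjsurj (z.val / p ^ m) hkp
  have hsub : ∀ a ∈ A, inn p (m + 1) d (g - a)
      = z - (j a : ZMod (p ^ (m + 1))) * (p : ZMod (p ^ (m + 1))) ^ m := by
    intro a ha
    rw [inn_sub_right p hp1 (m + 1) (by omega) d g a, hφa a ha, hzdef]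
    ring
  have hmemT : ∀ a ∈ A,
      ((g - a) ∈ Finset.filter (fun t => (inn p (m + 1) d t).val < p ^ m) Finset.univ
        ↔ (z - (j a : ZMod (p ^ (m + 1))) * (p : ZMod (p ^ (m + 1))) ^ m).val < p ^ m) := by
    intro a ha
    rw [Finset.mem_filter]
    simp only [Finset.mem_univ, true_and]
    rw [hsub a ha]
  have hex : (z - (j a₀ : ZMod (p ^ (m + 1))) * (p : ZMod (p ^ (m + 1))) ^ m).val < p ^ m := by
    rw [hja₀]
    exact digit_exists hp1 z
  refine ⟨(a₀, g - a₀), ⟨ha₀, (hmemT a₀ ha₀).mpr hex,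
    (add_sub_cancel a₀ g).symm⟩, ?_⟩
  rintro ⟨a, t⟩ ⟨haA, htT, hgat⟩
  have ht : t = g - a := by
    rw [hgat]
    exact (add_sub_cancel_left a t).symm
  subst ht
  have hlt : (z - (j a : ZMod (p ^ (m + 1))) * (p : ZMod (p ^ (m + 1))) ^ m).val < p ^ m :=
    (hmemT a haA).mp htT
  have hjeq : j a = z.val / p ^ m :=
    digit_unique hp1 z (j a) (z.val / p ^ m) (hjspec a haA).1 hkp hlt (digit_exists hp1 z)
  have haa : a = a₀ := hjinj haA ha₀ (by rw [hjeq, hja₀])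
  rw [haa]
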